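/- With the recursive definition of the disjunctions 𝒟_S and previsions y_S below, for every n ≥ 1 the prevision ηₙ := y_{{1,…,n}} of the disjunction 𝒟ₙ satisfies: max{P(E₁|H₁), …, P(Eₙ|Hₙ)} ≤ ηₙ ≤ min{P(E₁|H₁) + ⋯ + P(Eₙ|Hₙ), 1}, where y_{{i}} = P(Eᵢ|Hᵢ) = P(Eᵢ∩Hᵢ)/P(Hᵢ). -/

import Mathlib

open MeasureTheory

/-- The recursive system defining the disjunction `𝒟_S` of the conditional events
`Eᵢ|Hᵢ, i ∈ S`, together with its prevision `y_S`, for every nonempty `S ⊆ {1,…,n}`: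
for `ω ∈ ⋃_{i∈S} Hᵢ` let `T(ω) := {i ∈ S : ω ∉ Hᵢ}`; then
`𝒟_S(ω) = 1` if `ω ∈ Eᵢ∩Hᵢ` for some `i ∈ S`;
`𝒟_S(ω) = 0` if `ω ∈ Hᵢ∖Eᵢ` for every `i ∈ S`;
`𝒟_S(ω) = y_{T(ω)}` if `ω ∈ Hᵢ∖Eᵢ` for every `i ∈ S∖T(ω)` and `∅ ≠ T(ω) ⊊ S`;
`y_S = E[𝒟_S·1_{⋃_{i∈S}Hᵢ}]/P(⋃_{i∈S}Hᵢ)`; and `𝒟_S(ω) = y_S` for `ω ∈ ⋂_{i∈S} Hᵢᶜ`. -/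
structure DisjunctionSystem {Ω : Type*} [MeasurableSpace Ω] (P : Measure Ω)
    {n : ℕ} (E H : Fin n → Set Ω) (D : Finset (Fin n) → Ω → ℝ)
    (y : Finset (Fin n) → ℝ) : Prop where
  eq_one : ∀ S : Finset (Fin n), S.Nonempty → ∀ ω : Ω,
    (∃ i ∈ S, ω ∈ E i ∩ H i) → D S ω = 1
  eq_zero : ∀ S : Finset (Fin n), S.Nonempty → ∀ ω : Ω,
    (∀ i ∈ S, ω ∈ H i ∧ ω ∉ E i) → D S ω = 0
  eq_part : ∀ S : Finset (Fin n), S.Nonempty → ∀ ω : Ω, ∀ T : Finset (Fin n),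
    T ⊆ S → T.Nonempty → T ≠ S → (∀ i ∈ S, (i ∈ T ↔ ω ∉ H i)) →
    (∀ i ∈ S, i ∉ T → ω ∈ H i ∧ ω ∉ E i) → D S ω = y T
  prevision : ∀ S : Finset (Fin n), S.Nonempty →
    y S = (∫ ω in ⋃ i ∈ S, H i, D S ω ∂P) / (P (⋃ i ∈ S, H i)).toReal
  eq_off : ∀ S : Finset (Fin n), S.Nonempty → ∀ ω : Ω,
    (∀ i ∈ S, ω ∉ H i) → D S ω = y S

/-- For every `n ≥ 1`, the prevision `ηₙ := y_{{1,…,n}}` of the disjunction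
`𝒟ₙ` satisfies `max {P(E₁|H₁), …, P(Eₙ|Hₙ)} ≤ ηₙ ≤ min {P(E₁|H₁) + ⋯ + P(Eₙ|Hₙ), 1}`,
where `P(Eᵢ|Hᵢ) = P(Eᵢ∩Hᵢ)/P(Hᵢ)`. -/
theorem stmt8 {Ω : Type*} [MeasurableSpace Ω] (P : Measure Ω) [IsProbabilityMeasure P]
    (n : ℕ) (hn : 1 ≤ n) (E H : Fin n → Set Ω)
    (hE : ∀ i, MeasurableSet (E i)) (hH : ∀ i, MeasurableSet (H i))
    (hHpos : ∀ i, 0 < P (H i))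
    (D : Finset (Fin n) → Ω → ℝ) (y : Finset (Fin n) → ℝ)
    (hsys : DisjunctionSystem P E H D y) :
    Finset.univ.sup' (Finset.univ_nonempty_iff.mpr (Fin.pos_iff_nonempty.mp hn))
        (fun i => (P (E i ∩ H i)).toReal / (P (H i)).toReal) ≤ y Finset.univ ∧
      y Finset.univ ≤ min (∑ i, (P (E i ∩ H i)).toReal / (P (H i)).toReal) 1 := by
  classical
  set p : Fin n → ℝ := fun i => (P (E i ∩ H i)).toReal / (P (H i)).toReal with hp
  have hHfin : ∀ i, P (H i) ≠ ⊤ := fun i => measure_ne_top P _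
  have hHtoReal_pos : ∀ i, 0 < (P (H i)).toReal := fun i =>
    ENNReal.toReal_pos (hHpos i).ne' (hHfin i)
  have hp_nonneg : ∀ i, 0 ≤ p i := fun i =>
    div_nonneg ENNReal.toReal_nonneg ENNReal.toReal_nonneg
  have hp_le_one : ∀ i, p i ≤ 1 := fun i =>
    (div_le_one (hHtoReal_pos i)).mpr
      (ENNReal.toReal_mono (hHfin i) (measure_mono Set.inter_subset_right))
  have hp_mul : ∀ i, p i * (P (H i)).toReal = (P (E i ∩ H i)).toReal := fun i =>
    div_mul_cancel₀ _ (hHtoReal_pos i).ne'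
  set g : Finset (Fin n) → ℝ := fun T => if T.Nonempty then y T else 0 with hg
  have key : ∀ S : Finset (Fin n), S.Nonempty →
      (∀ j ∈ S, p j ≤ y S) ∧ y S ≤ 1 ∧ y S ≤ ∑ i ∈ S, p i := by
    intro S
    induction S using Finset.strongInduction with
    | _ S ih =>
    intro hS
    set U : Set Ω := ⋃ i ∈ S, H i with hU
    set A : Set Ω := ⋃ i ∈ S, E i ∩ H i with hA
    have hUmeas : MeasurableSet U := S.measurableSet_biUnion fun i _ => hH i
    have hAmeas : MeasurableSet A := S.measurableSet_biUnion fun i _ => (hE i).inter (hH i)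
    have hHU : ∀ i ∈ S, H i ⊆ U := fun i hi => Set.subset_biUnion_of_mem hi
    have hPU_ne_top : P U ≠ ⊤ := measure_ne_top P U
    have hPU_pos : 0 < (P U).toReal := by
      obtain ⟨j, hj⟩ := hS
      exact ENNReal.toReal_pos
        (lt_of_lt_of_le (hHpos j) (measure_mono (hHU j hj))).ne' hPU_ne_top
    -- bounds on g from the induction hypothesis
    have hg_bounds : ∀ T : Finset (Fin n), T ⊆ S → T ≠ S →
        0 ≤ g T ∧ g T ≤ 1 ∧ (∀ j ∈ T, p j ≤ g T) ∧ g T ≤ ∑ i ∈ T, p i := by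
      intro T hTS hTne
      by_cases hT : T.Nonempty
      · obtain ⟨h1, h2, h3⟩ := ih T (hTS.ssubset_of_ne hTne) hT
        have hgT : g T = y T := by simp [hg, hT]
        obtain ⟨j, hj⟩ := hT
        have h0 : 0 ≤ y T := le_trans (hp_nonneg j) (h1 j hj)
        simp only [hgT]
        exact ⟨h0, h2, h1, h3⟩
      · have hgT : g T = 0 := by simp [hg, hT]
        simp only [hgT]
        exact ⟨le_refl 0, zero_le_one, fun j hj => absurd ⟨j, hj⟩ hT,
          Finset.sum_nonneg fun i _ => hp_nonneg i⟩
    -- case analysis on the value of D S ω for ω ∈ U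
    have hcases : ∀ ω ∈ U, (D S ω = 1 ∧ ω ∈ A) ∨
        ∃ T : Finset (Fin n), T ⊆ S ∧ T ≠ S ∧ (∀ i ∈ S, (i ∈ T ↔ ω ∉ H i)) ∧
          ω ∉ A ∧ D S ω = g T := by
      intro ω hωU
      by_cases hωA : ω ∈ A
      · left
        refine ⟨hsys.eq_one S hS ω ?_, hωA⟩
        obtain ⟨i, hi, hmem⟩ := Set.mem_iUnion₂.mp hωA
        exact ⟨i, hi, hmem⟩
      · right
        refine ⟨S.filter (fun i => ω ∉ H i), Finset.filter_subset _ _, ?_,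
          fun i hi => by simp [Finset.mem_filter, hi], hωA, ?_⟩
        · obtain ⟨i₀, hi₀S, hi₀H⟩ := Set.mem_iUnion₂.mp hωU
          intro hEq
          have : i₀ ∈ S.filter (fun i => ω ∉ H i) := hEq.symm ▸ hi₀S
          exact (Finset.mem_filter.mp this).2 hi₀H
        · have hout : ∀ i ∈ S, i ∉ S.filter (fun i => ω ∉ H i) → ω ∈ H i ∧ ω ∉ E i := by
            intro i hi hni
            have hωH : ω ∈ H i := by
              by_contra h; exact hni (Finset.mem_filter.mpr ⟨hi, h⟩)
            refine ⟨hωH, fun hωE => hωA ?_⟩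
            exact Set.mem_biUnion hi ⟨hωE, hωH⟩
          by_cases hT : (S.filter (fun i => ω ∉ H i)).Nonempty
          · have hgT : g (S.filter (fun i => ω ∉ H i)) = y (S.filter (fun i => ω ∉ H i)) := by
              simp [hg, hT]
            rw [hgT]
            refine hsys.eq_part S hS ω _ (Finset.filter_subset _ _) hT ?_
              (fun i hi => by simp [Finset.mem_filter, hi]) hout
            obtain ⟨i₀, hi₀S, hi₀H⟩ := Set.mem_iUnion₂.mp hωU
            intro hEq
            have : i₀ ∈ S.filter (fun i => ω ∉ H i) := hEq.symm ▸ hi₀S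
            exact (Finset.mem_filter.mp this).2 hi₀H
          · have hgT : g (S.filter (fun i => ω ∉ H i)) = 0 := by simp [hg, hT]
            rw [hgT]
            exact hsys.eq_zero S hS ω fun i hi => hout i hi (fun h => hT ⟨i, h⟩)
    -- the partition sets C T and measurability of D S
    set C : Finset (Fin n) → Set Ω := fun T => {ω | ∀ i ∈ S, (i ∈ T ↔ ω ∉ H i)} with hC
    have hCmeas : ∀ T, MeasurableSet (C T) := by
      intro T
      have hCeq : C T = ⋂ i ∈ S, (if i ∈ T then (H i)ᶜ else H i) := by
        ext ω
        simp only [hC, Set.mem_setOf_eq, Set.mem_iInter]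
        refine forall₂_congr fun i hi => ?_
        by_cases h : i ∈ T <;> simp [h]
      rw [hCeq]
      exact S.measurableSet_biInter fun i _ => by
        split
        · exact (hH i).compl
        · exact hH i
    have hC_unique : ∀ (ω : Ω) (T : Finset (Fin n)), T ⊆ S → ω ∈ C T →
        T = S.filter (fun i => ω ∉ H i) := by
      intro ω T hTS hωT
      ext i
      simp only [Finset.mem_filter]
      constructor
      · intro hiT; exact ⟨hTS hiT, (hωT i (hTS hiT)).1 hiT⟩
      · rintro ⟨hiS, hiH⟩; exact (hωT i hiS).2 hiH
    set F : Ω → ℝ := fun ω => A.indicator (fun _ => 1) ω +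
        ∑ T ∈ S.powerset, (C T \ A).indicator (fun _ => if T = S then y S else g T) ω with hF
    have hFint : Integrable F P := by
      refine Integrable.add ((integrable_const 1).indicator hAmeas)
        (integrable_finset_sum _ fun T _ => ?_)
      exact (integrable_const _).indicator ((hCmeas T).diff hAmeas)
    have hDF : D S = F := by
      funext ω
      by_cases hωA : ω ∈ A
      · have h1 : D S ω = 1 := hsys.eq_one S hS ω
          (by obtain ⟨i, hi, hmem⟩ := Set.mem_iUnion₂.mp hωA; exact ⟨i, hi, hmem⟩)
        rw [h1]
        simp only [hF]
        rw [Set.indicator_of_mem hωA, Finset.sum_eq_zero fun T _ =>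
          Set.indicator_of_notMem (fun h => h.2 hωA) _, add_zero]
      · have hωC : ω ∈ C (S.filter (fun i => ω ∉ H i)) := by
          intro i hi; simp [Finset.mem_filter, hi]
        have hsum : ∑ T ∈ S.powerset,
            (C T \ A).indicator (fun _ => if T = S then y S else g T) ω =
            (if S.filter (fun i => ω ∉ H i) = S then y S else g (S.filter (fun i => ω ∉ H i))) := by
          rw [Finset.sum_eq_single (S.filter (fun i => ω ∉ H i))]
          · exact Set.indicator_of_mem
              (show ω ∈ C (S.filter (fun i => ω ∉ H i)) \ A from ⟨hωC, hωA⟩) _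
          · intro T hT hne
            exact Set.indicator_of_notMem
              (fun hmem => hne (hC_unique ω T (Finset.mem_powerset.mp hT) hmem.1)) _
          · intro h
            exact absurd (Finset.mem_powerset.mpr (Finset.filter_subset _ _)) h
        have hFω : F ω = if S.filter (fun i => ω ∉ H i) = S then y S
            else g (S.filter (fun i => ω ∉ H i)) := by
          simp only [hF]
          rw [Set.indicator_of_notMem hωA, hsum, zero_add]
        by_cases hωU : ω ∈ U
        · obtain ⟨_, hA'⟩ | ⟨T, hTS, hTne, hiff, _, hDg⟩ := hcases ω hωU
          · exact absurd hA' hωA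
          · have hTeq : T = S.filter (fun i => ω ∉ H i) := hC_unique ω T hTS hiff
            rw [hDg, hFω, if_neg (hTeq ▸ hTne), hTeq]
        · have hωH : ∀ i ∈ S, ω ∉ H i := fun i hi h => hωU (hHU i hi h)
          have hT₀S : S.filter (fun i => ω ∉ H i) = S :=
            Finset.filter_true_of_mem fun i hi => hωH i hi
          rw [hsys.eq_off S hS ω hωH, hFω, if_pos hT₀S]
    have hDint : IntegrableOn (D S) U P := by
      rw [hDF]; exact hFint.integrableOn
    -- integral of indicator constants over U
    have hind : ∀ (s : Set Ω), MeasurableSet s → s ⊆ U → ∀ c : ℝ,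
        ∫ ω in U, s.indicator (fun _ => c) ω ∂P = c * (P s).toReal := by
      intro s hs hsU c
      rw [MeasureTheory.setIntegral_indicator hs, Set.inter_eq_self_of_subset_right hsU,
        MeasureTheory.setIntegral_const, smul_eq_mul, mul_comm]
      rfl
    -- integral of the comparison function for index j
    have hintj : ∀ j ∈ S, ∫ ω in U, ((E j ∩ H j).indicator (fun _ => (1:ℝ)) ω +
        (U \ H j).indicator (fun _ => p j) ω) ∂P = p j * (P U).toReal := by
      intro j hj
      rw [MeasureTheory.integral_add
        (((integrable_const (1:ℝ)).indicator ((hE j).inter (hH j))).integrableOn)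
        (((integrable_const _).indicator (hUmeas.diff (hH j))).integrableOn),
        hind _ ((hE j).inter (hH j)) ((Set.inter_subset_right).trans (hHU j hj)) 1,
        hind _ (hUmeas.diff (hH j)) Set.diff_subset (p j)]
      have hdiff : P (U \ H j) = P U - P (H j) :=
        measure_diff (hHU j hj) (hH j).nullMeasurableSet (hHfin j)
      rw [hdiff, ENNReal.toReal_sub_of_le (measure_mono (hHU j hj)) hPU_ne_top,
        ← hp_mul j]
      ring
    have hprev : y S = (∫ ω in U, D S ω ∂P) / (P U).toReal := hsys.prevision S hS
    -- lower bound
    have hlow : ∀ j ∈ S, p j ≤ y S := by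
      intro j hj
      have hφint : Integrable (fun ω => (E j ∩ H j).indicator (fun _ => (1:ℝ)) ω +
          (U \ H j).indicator (fun _ => p j) ω) P :=
        ((integrable_const 1).indicator ((hE j).inter (hH j))).add
          ((integrable_const _).indicator (hUmeas.diff (hH j)))
      have hφle : ∀ ω ∈ U, (E j ∩ H j).indicator (fun _ => (1:ℝ)) ω +
          (U \ H j).indicator (fun _ => p j) ω ≤ D S ω := by
        intro ω hωU
        obtain ⟨hD1, hωA⟩ | ⟨T, hTS, hTne, hiff, hωA, hDg⟩ := hcases ω hωU
        · rw [hD1]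
          simp only [Set.indicator_apply]
          split_ifs with h1 h2
          · exact absurd h1.2 h2.2
          · simp
          · simpa using hp_le_one j
          · simp
        · rw [hDg]
          have hωEj : ω ∉ E j ∩ H j := fun h => hωA (Set.mem_biUnion hj h)
          rw [Set.indicator_of_notMem hωEj, zero_add]
          by_cases hjT : j ∈ T
          · rw [Set.indicator_of_mem (show ω ∈ U \ H j from ⟨hωU, (hiff j hj).1 hjT⟩)]
            exact (hg_bounds T hTS hTne).2.2.1 j hjT
          · have hωHj : ω ∈ H j := not_not.mp (fun h => hjT ((hiff j hj).2 h))
            rw [Set.indicator_of_notMem (fun h => h.2 hωHj)]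
            exact (hg_bounds T hTS hTne).1
      have hmono := MeasureTheory.setIntegral_mono_on hφint.integrableOn hDint hUmeas hφle
      rw [hintj j hj] at hmono
      rw [hprev]
      exact (le_div_iff₀ hPU_pos).mpr hmono
    refine ⟨hlow, ?_, ?_⟩
    · -- y S ≤ 1
      have hle1 : ∀ ω ∈ U, D S ω ≤ 1 := by
        intro ω hωU
        obtain ⟨hD1, _⟩ | ⟨T, hTS, hTne, _, _, hDg⟩ := hcases ω hωU
        · rw [hD1]
        · rw [hDg]; exact (hg_bounds T hTS hTne).2.1
      have hmono := MeasureTheory.setIntegral_mono_on hDint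
        (integrable_const (1:ℝ)).integrableOn hUmeas hle1
      rw [MeasureTheory.setIntegral_const, smul_eq_mul, mul_one] at hmono
      rw [hprev]
      exact (div_le_one hPU_pos).mpr hmono
    · -- y S ≤ ∑ p i
      have hterm_nonneg : ∀ (i : Fin n) (ω : Ω),
          0 ≤ (E i ∩ H i).indicator (fun _ => (1:ℝ)) ω +
            (U \ H i).indicator (fun _ => p i) ω :=
        fun i ω => add_nonneg (Set.indicator_nonneg (fun _ _ => zero_le_one) ω)
          (Set.indicator_nonneg (fun _ _ => hp_nonneg i) ω)
      have hψint : Integrable (fun ω => ∑ i ∈ S,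
          ((E i ∩ H i).indicator (fun _ => (1:ℝ)) ω +
            (U \ H i).indicator (fun _ => p i) ω)) P :=
        integrable_finset_sum _ fun i _ =>
          ((integrable_const 1).indicator ((hE i).inter (hH i))).add
            ((integrable_const _).indicator (hUmeas.diff (hH i)))
      have hψge : ∀ ω ∈ U, D S ω ≤ ∑ i ∈ S,
          ((E i ∩ H i).indicator (fun _ => (1:ℝ)) ω +
            (U \ H i).indicator (fun _ => p i) ω) := by
        intro ω hωU
        obtain ⟨hD1, hωA⟩ | ⟨T, hTS, hTne, hiff, hωA, hDg⟩ := hcases ω hωU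
        · obtain ⟨i₀, hi₀S, hi₀⟩ := Set.mem_iUnion₂.mp hωA
          rw [hD1]
          calc (1:ℝ) ≤ (E i₀ ∩ H i₀).indicator (fun _ => (1:ℝ)) ω +
              (U \ H i₀).indicator (fun _ => p i₀) ω := by
                rw [Set.indicator_of_mem hi₀]
                exact le_add_of_nonneg_right (Set.indicator_nonneg (fun _ _ => hp_nonneg i₀) ω)
            _ ≤ _ := Finset.single_le_sum (fun i _ => hterm_nonneg i ω) hi₀S
        · rw [hDg]
          calc g T ≤ ∑ i ∈ T, p i := (hg_bounds T hTS hTne).2.2.2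
            _ ≤ ∑ i ∈ T, ((E i ∩ H i).indicator (fun _ => (1:ℝ)) ω +
                (U \ H i).indicator (fun _ => p i) ω) := by
                refine Finset.sum_le_sum fun i hi => ?_
                rw [Set.indicator_of_mem (show ω ∈ U \ H i from ⟨hωU, (hiff i (hTS hi)).1 hi⟩)]
                exact le_add_of_nonneg_left (Set.indicator_nonneg (fun _ _ => zero_le_one) ω)
            _ ≤ _ := Finset.sum_le_sum_of_subset_of_nonneg hTS
                fun i _ _ => hterm_nonneg i ω
      have hmono := MeasureTheory.setIntegral_mono_on hDint hψint.integrableOn hUmeas hψge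
      have hψval : ∫ ω in U, (∑ i ∈ S,
          ((E i ∩ H i).indicator (fun _ => (1:ℝ)) ω +
            (U \ H i).indicator (fun _ => p i) ω)) ∂P = (∑ i ∈ S, p i) * (P U).toReal := by
        rw [MeasureTheory.integral_finset_sum (μ := P.restrict U)
          (f := fun i ω => (E i ∩ H i).indicator (fun _ => (1:ℝ)) ω +
            (U \ H i).indicator (fun _ => p i) ω) S (fun i _ =>
          (((integrable_const 1).indicator ((hE i).inter (hH i))).add
            ((integrable_const _).indicator (hUmeas.diff (hH i)))).integrableOn),
          Finset.sum_mul]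
        exact Finset.sum_congr rfl fun i hi => hintj i hi
      rw [hψval] at hmono
      rw [hprev]
      exact (div_le_iff₀ hPU_pos).mpr hmono
  obtain ⟨h1, h2, h3⟩ := key Finset.univ ⟨⟨0, hn⟩, Finset.mem_univ _⟩
  exact ⟨Finset.sup'_le _ _ fun i _ => h1 i (Finset.mem_univ i), le_min h3 h2⟩
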